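/- Let q > 1 be an integer and let Fr act on the formal power series ring ℂ⟦X₁,…,X_j⟧ in a way compatible with the multiplication-by-q map on the formal torus, i.e. Fr(X_i) = (1+X_i)^q − 1 for each i. Then the quotient ring ℂ⟦X₁,…,X_j⟧/(X_i − Fr(X_i) : 1 ≤ i ≤ j) is a finite-dimensional ℂ-vector space. -/

import Mathlib

open MvPowerSeries

/-- Every multivariate power series (in finitely many variables) with zero constant
coefficient lies in the ideal generated by the variables. -/
lemma mem_span_X_of_constantCoeff_zero {j : ℕ} (f : MvPowerSeries (Fin j) ℂ)
    (hf : (constantCoeff (σ := Fin j) (R := ℂ)) f = 0) :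
    f ∈ Ideal.span (Set.range fun i : Fin j => (X i : MvPowerSeries (Fin j) ℂ)) := by
  classical
  set g : Fin j → MvPowerSeries (Fin j) ℂ := fun i m =>
    if ∀ k < i, m k = 0 then f (m + Finsupp.single i 1) else 0 with hg
  have hgc : ∀ (i : Fin j) (d : Fin j →₀ ℕ),
      coeff d (g i) = if ∀ k < i, d k = 0 then f (d + Finsupp.single i 1) else 0 := by
    intro i d; rfl
  have hsum : f = ∑ i, X i * g i := by
    ext m
    rw [map_sum]
    by_cases hm : m = 0
    · subst hm
      have h0 : ∀ i : Fin j, coeff 0 (X i * g i) = 0 := by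
        intro i
        rw [X, coeff_monomial_mul, if_neg]
        intro h
        simpa using Finsupp.single_le_iff.mp h
      simp only [h0, Finset.sum_const_zero]
      simpa [coeff_zero_eq_constantCoeff] using hf
    · have hsupp : m.support.Nonempty := Finsupp.support_nonempty_iff.mpr hm
      set i₀ := m.support.min' hsupp with hi₀
      have hi₀mem : i₀ ∈ m.support := m.support.min'_mem hsupp
      have hi₀pos : m i₀ ≠ 0 := Finsupp.mem_support_iff.mp hi₀mem
      have hi₀min : ∀ k < i₀, m k = 0 := by
        intro k hk
        by_contra hk0
        exact absurd (m.support.min'_le k (Finsupp.mem_support_iff.mpr hk0)) (not_le.mpr hk)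
      have hle₀ : Finsupp.single i₀ 1 ≤ m :=
        Finsupp.single_le_iff.mpr (Nat.one_le_iff_ne_zero.mpr hi₀pos)
      rw [Finset.sum_eq_single i₀]
      · rw [X, coeff_monomial_mul, if_pos hle₀, one_mul, hgc, if_pos,
          tsub_add_cancel_of_le hle₀, coeff_apply]
        intro k hk
        rw [Finsupp.tsub_apply, Finsupp.single_apply, if_neg hk.ne', Nat.sub_zero]
        exact hi₀min k hk
      · intro i _ hi
        rw [X, coeff_monomial_mul]
        by_cases hle : Finsupp.single i 1 ≤ m
        · rw [if_pos hle, hgc, if_neg, mul_zero]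
          intro h
          have hmi : m i ≠ 0 := Nat.one_le_iff_ne_zero.mp (Finsupp.single_le_iff.mp hle)
          have hmk : ∀ k < i, m k = 0 := by
            intro k hk
            have := h k hk
            rwa [Finsupp.tsub_apply, Finsupp.single_apply, if_neg hk.ne', Nat.sub_zero] at this
          apply hi
          have h1 : i₀ ≤ i := m.support.min'_le i (Finsupp.mem_support_iff.mpr hmi)
          rcases lt_or_eq_of_le h1 with h2 | h2
          · exact absurd (hmk i₀ h2) hi₀pos
          · exact h2.symm
        · rw [if_neg hle]
      · intro h
        exact absurd (Finset.mem_univ i₀) h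
  rw [hsum]
  exact Ideal.sum_mem _ fun i _ =>
    Ideal.mul_mem_right _ _ (Ideal.subset_span ⟨i, rfl⟩)

/-- De Jong's trick, key step: for `q > 1`, the quotient of `ℂ⟦X₁,…,X_j⟧` by the ideal
generated by `X_i - Fr(X_i)`, where `Fr(X_i) = (1+X_i)^q - 1` is multiplication by `q`
on the formal torus, is a finite-dimensional `ℂ`-vector space. -/
theorem deJong_fixed_points_finite (j q : ℕ) (hq : 1 < q) :
    FiniteDimensional ℂ
      (MvPowerSeries (Fin j) ℂ ⧸
        Ideal.span (Set.range fun i : Fin j =>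
          (MvPowerSeries.X i : MvPowerSeries (Fin j) ℂ) -
            ((1 + MvPowerSeries.X i) ^ q - 1))) := by
  classical
  set I := Ideal.span (Set.range fun i : Fin j =>
      (MvPowerSeries.X i : MvPowerSeries (Fin j) ℂ) -
        ((1 + MvPowerSeries.X i) ^ q - 1)) with hI
  -- each generator factors as (1 - geometric sum) * X i
  have hfac : ∀ i : Fin j,
      (X i : MvPowerSeries (Fin j) ℂ) - ((1 + X i) ^ q - 1) =
        (1 - ∑ k ∈ Finset.range q, (1 + X i) ^ k) * X i := by
    intro i
    have h := geom_sum_mul (1 + X i : MvPowerSeries (Fin j) ℂ) q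
    have h1 : ((1 + X i : MvPowerSeries (Fin j) ℂ) - 1) = X i := by ring
    rw [h1] at h
    rw [← h]; ring
  -- the factor is a unit since its constant coefficient is 1 - q ≠ 0
  have hunit : ∀ i : Fin j,
      IsUnit (1 - ∑ k ∈ Finset.range q, (1 + X i : MvPowerSeries (Fin j) ℂ) ^ k) := by
    intro i
    rw [isUnit_iff_constantCoeff]
    have : (constantCoeff (σ := Fin j) (R := ℂ)) (∑ k ∈ Finset.range q, (1 + X i) ^ k) = q := by
      rw [map_sum]
      simp [constantCoeff_X]
    rw [map_sub, map_one, this, isUnit_iff_ne_zero, sub_ne_zero]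
    intro h
    have h1 : (1 : ℕ) = q := by exact_mod_cast h
    omega
  -- hence each X i lies in I
  have hXmem : ∀ i : Fin j, (X i : MvPowerSeries (Fin j) ℂ) ∈ I := by
    intro i
    obtain ⟨v, hv⟩ := hunit i
    have hgen : (X i : MvPowerSeries (Fin j) ℂ) - ((1 + X i) ^ q - 1) ∈ I :=
      Ideal.subset_span ⟨i, rfl⟩
    have : (X i : MvPowerSeries (Fin j) ℂ) =
        (↑v⁻¹ : MvPowerSeries (Fin j) ℂ) *
          ((X i : MvPowerSeries (Fin j) ℂ) - ((1 + X i) ^ q - 1)) := by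
      rw [hfac i, ← hv, ← mul_assoc, Units.inv_mul, one_mul]
    rw [this]
    exact Ideal.mul_mem_left _ _ hgen
  -- I equals the kernel of the constant coefficient map
  have hker : I = RingHom.ker ((constantCoeff (σ := Fin j) (R := ℂ))) := by
    apply le_antisymm
    · rw [hI, Ideal.span_le]
      rintro _ ⟨i, rfl⟩
      simp only [RingHom.mem_ker, SetLike.mem_coe, map_sub, map_pow, map_add, map_one,
        constantCoeff_X, add_zero, one_pow, sub_self, sub_zero]
    · intro f hf
      have := mem_span_X_of_constantCoeff_zero f hf
      refine Ideal.span_le.mpr ?_ this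
      rintro _ ⟨i, rfl⟩
      exact hXmem i
  -- constantCoeff as an algebra hom
  let φ : MvPowerSeries (Fin j) ℂ →ₐ[ℂ] ℂ :=
    { (constantCoeff (σ := Fin j) (R := ℂ)) with
      commutes' := fun r => by
        simp [← MvPowerSeries.c_eq_algebraMap, constantCoeff_C] }
  have hφsurj : Function.Surjective φ := fun r => ⟨C (σ := Fin j) (R := ℂ) r, constantCoeff_C r⟩
  have hkerφ : I = RingHom.ker φ := hker
  let e : (MvPowerSeries (Fin j) ℂ ⧸ I) ≃ₐ[ℂ] ℂ :=
    (Ideal.quotientEquivAlgOfEq ℂ hkerφ).trans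
      (Ideal.quotientKerAlgEquivOfSurjective hφsurj)
  exact Module.Finite.equiv e.symm.toLinearEquiv
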